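/- Let (X, Σ) be a measurable space, let D be a probability measure on X × {−1, 1}, let M ≥ 1 and let f₁, …, f_M : X → {−1, 1} be measurable classifiers. Let δ ∈ (0, 1), let N ≥ 1, and let (x_j, y_j)_{j=1}^N be i.i.d. samples from D. Define the empirical error êrr(f) := (1/N)·|{ j ∈ {1,…,N} : f(x_j) ≠ y_j }|, and let î ∈ {1,…,M} be any index minimizing êrr(f_i). Then with probability at least 1 − δ over the N samples, err_D(f_{î}) ≤ min_{i ∈ {1,…,M}} err_D(f_i) + 2·√( log(2M/δ) / (2N) ). -/

import Mathlib

open MeasureTheory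

/-- The two-element label set `{-1, 1}`. -/
abbrev Sign : Type := ({-1, 1} : Set ℤ)

/-- The error of classifier `c` with respect to distribution `D` on `X × {-1,1}`. -/
noncomputable def errD {X : Type*} [MeasurableSpace X]
    (D : Measure (X × Sign)) (c : X → Sign) : ℝ :=
  (D {p | c p.1 ≠ p.2}).toReal

/-- The empirical error of classifier `c` on a sample of `N` labeled examples. -/
noncomputable def empErr {X : Type*} {N : ℕ} (c : X → Sign)
    (ω : Fin N → X × Sign) : ℝ :=
  ((Finset.univ.filter fun j : Fin N => c (ω j).1 ≠ (ω j).2).card : ℝ) / N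


open Real
open scoped ENNReal

/-- Hoeffding's lemma, Bernoulli case. -/
lemma bernoulli_mgf_bound {p : ℝ} (hp0 : 0 ≤ p) (hp1 : p ≤ 1) (t : ℝ) :
    p * Real.exp t + (1 - p) ≤ Real.exp (t * p + t ^ 2 / 8) := by
  set q : ℝ := 1 - p with hq
  clear_value q
  have hq0 : 0 ≤ q := by rw [hq]; linarith
  have hpos : ∀ s : ℝ, 0 < p * Real.exp s + q := by
    intro s
    rcases lt_or_eq_of_le hp0 with h | h
    · positivity
    · have : q = 1 := by simp [hq, ← h]
      rw [← h]; simp [this]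
  -- F t = t*p + t^2/8 - log (p e^t + q) ; show F ≥ 0
  set F : ℝ → ℝ := fun s => s * p + s ^ 2 / 8 - Real.log (p * Real.exp s + q) with hF
  set F' : ℝ → ℝ := fun s => p + s / 4 - p * Real.exp s / (p * Real.exp s + q) with hF'
  have hder : ∀ s : ℝ, HasDerivAt F (F' s) s := by
    intro s
    have h1 : HasDerivAt (fun s : ℝ => p * Real.exp s + q) (p * Real.exp s) s := by
      simpa using ((Real.hasDerivAt_exp s).const_mul p).add_const q
    have h2 : HasDerivAt (fun s : ℝ => Real.log (p * Real.exp s + q))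
        (p * Real.exp s / (p * Real.exp s + q)) s := h1.log (hpos s).ne'
    have h3 : HasDerivAt (fun s : ℝ => s * p + s ^ 2 / 8) (p + s / 4) s := by
      have := ((hasDerivAt_id s).mul_const p).add (((hasDerivAt_pow 2 s)).div_const 8)
      refine this.congr_deriv ?_
      norm_num
      ring
    exact h3.sub h2
  have hder' : ∀ s : ℝ, HasDerivAt F' (1 / 4 - p * Real.exp s * q / (p * Real.exp s + q) ^ 2) s := by
    intro s
    have h1 : HasDerivAt (fun s : ℝ => p * Real.exp s + q) (p * Real.exp s) s := by
      simpa using ((Real.hasDerivAt_exp s).const_mul p).add_const q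
    have h2 : HasDerivAt (fun s : ℝ => p * Real.exp s) (p * Real.exp s) s := by
      simpa using (Real.hasDerivAt_exp s).const_mul p
    have h3 := h2.div h1 (hpos s).ne'
    have h4 : HasDerivAt (fun s : ℝ => p + s / 4) (1 / 4) s := by
      simpa using ((hasDerivAt_id s).div_const 4).const_add p
    have h5 := h4.sub h3
    refine h5.congr_deriv ?_
    field_simp
    ring
  have hd2nonneg : ∀ s : ℝ, 0 ≤ 1 / 4 - p * Real.exp s * q / (p * Real.exp s + q) ^ 2 := by
    intro s
    rw [sub_nonneg, div_le_iff₀ (pow_pos (hpos s) 2)]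
    have hid : (p * Real.exp s + q) ^ 2
        = (p * Real.exp s - q) ^ 2 + 4 * (p * Real.exp s * q) := by ring
    nlinarith [sq_nonneg (p * Real.exp s - q)]
  have hF'mono : Monotone F' := by
    have hdiff : Differentiable ℝ F' := fun s => (hder' s).differentiableAt
    apply monotone_of_deriv_nonneg hdiff
    intro s
    rw [(hder' s).deriv]
    exact hd2nonneg s
  have hF'0 : F' 0 = 0 := by
    rw [hF']
    simp only [Real.exp_zero, mul_one]
    have : p + q = 1 := by rw [hq]; ring
    rw [this]
    norm_num
  have hF0 : F 0 = 0 := by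
    rw [hF]
    simp only [Real.exp_zero, mul_one, zero_mul]
    have : p + q = 1 := by rw [hq]; ring
    rw [this]
    norm_num
  have hFnonneg : ∀ s : ℝ, 0 ≤ F s := by
    intro s
    rcases le_total 0 s with h | h
    · have : MonotoneOn F (Set.Ici 0) := by
        apply monotoneOn_of_deriv_nonneg (convex_Ici 0)
          (fun x _ => ((hder x).differentiableAt.continuousAt.continuousWithinAt))
          (fun x _ => (hder x).differentiableAt.differentiableWithinAt)
        intro x hx
        rw [(hder x).deriv]
        have : F' 0 ≤ F' x := hF'mono (le_of_lt (by simpa using hx))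
        linarith [hF'0 ▸ this]
      have := this (Set.self_mem_Ici) (Set.mem_Ici.mpr h) h
      linarith [hF0 ▸ this]
    · have : AntitoneOn F (Set.Iic 0) := by
        apply antitoneOn_of_deriv_nonpos (convex_Iic 0)
          (fun x _ => ((hder x).differentiableAt.continuousAt.continuousWithinAt))
          (fun x _ => (hder x).differentiableAt.differentiableWithinAt)
        intro x hx
        rw [(hder x).deriv]
        have : F' x ≤ F' 0 := hF'mono (le_of_lt (by simpa using hx))
        linarith [hF'0 ▸ this]
      have := this (Set.mem_Iic.mpr h) (Set.self_mem_Iic) h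
      linarith [hF0 ▸ this]
  have key := hFnonneg t
  have hlog : Real.log (p * Real.exp t + q) ≤ t * p + t ^ 2 / 8 := by
    simp only [hF] at key; linarith
  calc p * Real.exp t + q = Real.exp (Real.log (p * Real.exp t + q)) :=
        (Real.exp_log (hpos t)).symm
    _ ≤ Real.exp (t * p + t ^ 2 / 8) := Real.exp_le_exp.mpr hlog

/-- One-sided Chernoff/Hoeffding tail bound for sums of i.i.d. {0,1}-valued functions. -/
lemma tail_bound {Y : Type*} [MeasurableSpace Y] (D : Measure Y) [IsProbabilityMeasure D]
    {g : Y → ℝ} (hg : Measurable g) (hg01 : ∀ y, g y = 0 ∨ g y = 1)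
    (N : ℕ) {ε : ℝ} (hε : 0 ≤ ε) :
    (Measure.pi fun _ : Fin N => D)
      {ω : Fin N → Y | (N : ℝ) * ((∫ y, g y ∂D) + ε) ≤ ∑ j : Fin N, g (ω j)}
      ≤ ENNReal.ofReal (Real.exp (-(2 * N * ε ^ 2))) := by
  letI : MeasureSpace Y := ⟨D⟩
  have hvol : (Measure.pi fun _ : Fin N => D) = (volume : Measure (Fin N → Y)) :=
    (MeasureTheory.volume_pi).symm
  rw [hvol]
  set p : ℝ := ∫ y, g y ∂D with hp
  have hg0 : ∀ y, 0 ≤ g y := fun y => by rcases hg01 y with h | h <;> simp [h]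
  have hg1 : ∀ y, g y ≤ 1 := fun y => by rcases hg01 y with h | h <;> simp [h]
  have hgint : Integrable g D :=
    ⟨hg.aestronglyMeasurable, HasFiniteIntegral.of_bounded (C := 1)
      (Filter.Eventually.of_forall fun y => by
        rw [Real.norm_eq_abs, abs_le]; exact ⟨by linarith [hg0 y], hg1 y⟩)⟩
  have hp0 : 0 ≤ p := integral_nonneg hg0
  have hp1 : p ≤ 1 := by
    calc p ≤ ∫ _ : Y, (1 : ℝ) ∂D := integral_mono hgint (integrable_const 1) hg1
      _ = 1 := by simp
  set t : ℝ := 4 * ε with ht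
  have ht0 : 0 ≤ t := by positivity
  set X : (Fin N → Y) → ℝ := fun ω => ∑ j : Fin N, g (ω j) with hX
  have hXmeas : Measurable X := by
    apply Finset.measurable_sum
    intro j _
    exact hg.comp (measurable_pi_apply j)
  have hXle : ∀ ω, X ω ≤ N := by
    intro ω
    calc X ω ≤ ∑ _j : Fin N, (1 : ℝ) := Finset.sum_le_sum fun j _ => hg1 _
      _ = N := by simp
  have hX0 : ∀ ω, 0 ≤ X ω := fun ω => Finset.sum_nonneg fun j _ => hg0 _
  have h_int : Integrable (fun ω => Real.exp (t * X ω)) (volume : Measure (Fin N → Y)) := by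
    refine ⟨((hXmeas.const_mul t).exp).aestronglyMeasurable,
      HasFiniteIntegral.of_bounded (C := Real.exp (t * N))
      (Filter.Eventually.of_forall fun ω => ?_)⟩
    rw [Real.norm_eq_abs, abs_of_pos (Real.exp_pos _)]
    exact Real.exp_le_exp.mpr (mul_le_mul_of_nonneg_left (hXle ω) ht0)
  -- the single-coordinate mgf
  have hsingle : ∫ y, Real.exp (t * g y) ∂D = p * Real.exp t + (1 - p) := by
    have heq : ∀ y, Real.exp (t * g y) = (Real.exp t - 1) * g y + 1 := by
      intro y
      rcases hg01 y with h | h <;> simp [h]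
    simp_rw [heq]
    rw [integral_add (hgint.const_mul _) (integrable_const 1), integral_const_mul]
    simp only [integral_const, measure_univ, ENNReal.toReal_one, probReal_univ, smul_eq_mul, mul_one, ← hp]
    ring
  have hmgf : ProbabilityTheory.mgf X volume t = (p * Real.exp t + (1 - p)) ^ N := by
    rw [ProbabilityTheory.mgf]
    have : ∀ ω : Fin N → Y, Real.exp (t * X ω) = ∏ j : Fin N, Real.exp (t * g (ω j)) := by
      intro ω
      rw [hX, Finset.mul_sum, Real.exp_sum]
    simp_rw [this]
    rw [MeasureTheory.volume_pi]
    rw [MeasureTheory.integral_fintype_prod_eq_pow (ι := Fin N) (fun y => Real.exp (t * g y)),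
      show (∫ x : Y, Real.exp (t * g x)) = ∫ y, Real.exp (t * g y) ∂D from rfl, hsingle]
    simp
  have hchernoff := ProbabilityTheory.measure_ge_le_exp_mul_mgf
    (X := X) (μ := volume) ((N : ℝ) * (p + ε)) ht0 h_int
  rw [hmgf] at hchernoff
  have hbound : Real.exp (-t * ((N:ℝ) * (p + ε))) * (p * Real.exp t + (1 - p)) ^ N
      ≤ Real.exp (-(2 * N * ε ^ 2)) := by
    have h1 : (p * Real.exp t + (1 - p)) ^ N ≤ Real.exp (t * p + t ^ 2 / 8) ^ N := by
      apply pow_le_pow_left₀ (by nlinarith [Real.exp_pos t]) (bernoulli_mgf_bound hp0 hp1 t)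
    calc Real.exp (-t * ((N:ℝ) * (p + ε))) * (p * Real.exp t + (1 - p)) ^ N
        ≤ Real.exp (-t * ((N:ℝ) * (p + ε))) * Real.exp (t * p + t ^ 2 / 8) ^ N := by
          apply mul_le_mul_of_nonneg_left h1 (le_of_lt (Real.exp_pos _))
      _ = Real.exp (-t * ((N:ℝ) * (p + ε)) + N * (t * p + t ^ 2 / 8)) := by
          rw [← Real.exp_nat_mul, ← Real.exp_add]
      _ ≤ Real.exp (-(2 * N * ε ^ 2)) := by
          apply Real.exp_le_exp.mpr
          rw [ht]
          ring_nf
          nlinarith [sq_nonneg ε, Nat.cast_nonneg (α := ℝ) N]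
  have hne : (volume : Measure (Fin N → Y)) {ω | (N : ℝ) * (p + ε) ≤ X ω} ≠ ⊤ :=
    measure_ne_top _ _
  have := le_trans hchernoff hbound
  calc (volume : Measure (Fin N → Y)) {ω : Fin N → Y | (N : ℝ) * (p + ε) ≤ ∑ j, g (ω j)}
      = ENNReal.ofReal (((volume : Measure (Fin N → Y)) {ω | (N : ℝ) * (p + ε) ≤ X ω}).toReal) := by
        rw [ENNReal.ofReal_toReal hne]
    _ ≤ ENNReal.ofReal (Real.exp (-(2 * N * ε ^ 2))) := ENNReal.ofReal_le_ofReal this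

/-- validation-set selection: if `î` (here `sel ω`) is any index
minimizing the empirical error on `N` i.i.d. validation samples, then with probability at
least `1 - δ`, `err_D(f_{î}) ≤ min_i err_D(f_i) + 2·√(log(2M/δ)/(2N))`. -/
theorem statement13 {X : Type*} [MeasurableSpace X]
    (D : Measure (X × Sign)) [IsProbabilityMeasure D]
    (M : ℕ) (hM : 1 ≤ M)
    (f : Fin M → X → Sign) (hf : ∀ i, Measurable (f i))
    (δ : ℝ) (hδ0 : 0 < δ) (hδ1 : δ < 1) (N : ℕ) (hN : 1 ≤ N)
    (sel : (Fin N → X × Sign) → Fin M)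
    (hsel : ∀ ω, ∀ i : Fin M, empErr (f (sel ω)) ω ≤ empErr (f i) ω) :
    ENNReal.ofReal (1 - δ) ≤
      (Measure.pi fun _ : Fin N => D)
        {ω | errD D (f (sel ω)) ≤
          (Finset.univ.inf' (Finset.univ_nonempty_iff.mpr ⟨⟨0, hM⟩⟩)
            fun i : Fin M => errD D (f i)) +
          2 * Real.sqrt (Real.log (2 * M / δ) / (2 * N))} := by
  classical
  set μ := Measure.pi fun _ : Fin N => D with hμ
  have hNpos : (0:ℝ) < N := by exact_mod_cast hN
  have hMpos : (0:ℝ) < M := by exact_mod_cast hM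
  set ε : ℝ := Real.sqrt (Real.log (2 * M / δ) / (2 * N)) with hε
  have hε0 : 0 ≤ ε := Real.sqrt_nonneg _
  have hlognn : 0 ≤ Real.log (2 * M / δ) := by
    apply Real.log_nonneg
    rw [le_div_iff₀ hδ0]
    have hM1 : (1:ℝ) ≤ M := by exact_mod_cast hM
    nlinarith
  have hε2 : ε ^ 2 = Real.log (2 * M / δ) / (2 * N) := by
    rw [hε, sq_sqrt (by positivity)]
  have hkey : Real.exp (-(2 * N * ε ^ 2)) = δ / (2 * M) := by
    rw [hε2]
    have h2N : (2 : ℝ) * N ≠ 0 := by positivity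
    rw [show 2 * (N:ℝ) * (Real.log (2 * M / δ) / (2 * N)) = Real.log (2 * M / δ) by
      field_simp]
    rw [Real.exp_neg, Real.exp_log (by positivity)]
    rw [inv_div]
  -- the indicator functions
  set g : Fin M → (X × Sign) → ℝ := fun i pr => if f i pr.1 ≠ pr.2 then 1 else 0 with hg
  have hA : ∀ i, MeasurableSet {pr : X × Sign | f i pr.1 ≠ pr.2} := by
    intro i
    exact (measurableSet_eq_fun (((hf i).comp measurable_fst)) measurable_snd).compl
  have hgmeas : ∀ i, Measurable (g i) := by
    intro i
    exact Measurable.ite (hA i) measurable_const measurable_const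
  have hg01 : ∀ i y, g i y = 0 ∨ g i y = 1 := by
    intro i y
    by_cases h : f i y.1 ≠ y.2 <;> simp [hg, h]
  have hgint : ∀ i, ∫ y, g i y ∂D = errD D (f i) := by
    intro i
    have : ∀ y, g i y = Set.indicator {pr : X × Sign | f i pr.1 ≠ pr.2} (1 : (X × Sign) → ℝ) y := by
      intro y
      rw [Set.indicator_apply]
      simp [hg, Set.mem_setOf_eq]
    simp_rw [this]
    rw [integral_indicator_one (hA i)]
    rfl
  -- empirical error formula
  have hemp : ∀ (i : Fin M) (ω : Fin N → X × Sign),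
      empErr (f i) ω = (∑ j : Fin N, g i (ω j)) / N := by
    intro i ω
    rw [empErr, Finset.card_filter]
    congr 1
    push_cast
    apply Finset.sum_congr rfl
    intro j _
    by_cases h : f i (ω j).1 = (ω j).2 <;> simp [hg, h]
  -- tail events
  have hup : ∀ i : Fin M,
      μ {ω : Fin N → X × Sign | (N : ℝ) * (errD D (f i) + ε) ≤ ∑ j : Fin N, g i (ω j)}
        ≤ ENNReal.ofReal (δ / (2 * M)) := by
    intro i
    have := tail_bound D (hgmeas i) (hg01 i) N hε0
    rw [hgint i, hkey] at this
    exact this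
  have hdown : ∀ i : Fin M,
      μ {ω : Fin N → X × Sign |
          (N : ℝ) * ((1 - errD D (f i)) + ε) ≤ ∑ j : Fin N, (1 - g i (ω j))}
        ≤ ENNReal.ofReal (δ / (2 * M)) := by
    intro i
    have hmeas' : Measurable (fun y => 1 - g i y) := measurable_const.sub (hgmeas i)
    have h01' : ∀ y, (1 : ℝ) - g i y = 0 ∨ (1:ℝ) - g i y = 1 := by
      intro y
      rcases hg01 i y with h | h <;> simp [h]
    have hint' : ∫ y, (1 - g i y) ∂D = 1 - errD D (f i) := by
      rw [integral_sub (integrable_const 1) ?_]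
      · rw [hgint i]
        simp
      · refine ⟨(hgmeas i).aestronglyMeasurable, HasFiniteIntegral.of_bounded (C := 1)
          (Filter.Eventually.of_forall fun y => ?_)⟩
        rcases hg01 i y with h | h <;> simp [h]
    have := tail_bound D hmeas' h01' N hε0
    rw [hint', hkey] at this
    exact this
  -- the good event
  set G : Set (Fin N → X × Sign) :=
    {ω | ∀ i : Fin M, |(∑ j : Fin N, g i (ω j)) / N - errD D (f i)| ≤ ε} with hG
  set S : Fin M → Set (Fin N → X × Sign) := fun i =>
    {ω : Fin N → X × Sign | (N : ℝ) * (errD D (f i) + ε) ≤ ∑ j : Fin N, g i (ω j)} ∪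
    {ω : Fin N → X × Sign |
        (N : ℝ) * ((1 - errD D (f i)) + ε) ≤ ∑ j : Fin N, (1 - g i (ω j))} with hS
  have hGc : Gᶜ ⊆ ⋃ i : Fin M, S i := by
    intro ω hω
    rw [hG] at hω
    simp only [Set.mem_compl_iff, Set.mem_setOf_eq, not_forall] at hω
    obtain ⟨i, hi⟩ := hω
    rw [not_le] at hi
    apply Set.mem_iUnion.mpr
    refine ⟨i, ?_⟩
    rw [hS]
    rcases lt_abs.mp hi with h | h
    · left
      simp only [Set.mem_setOf_eq]
      have h2 : (errD D (f i) + ε) * N < ∑ j : Fin N, g i (ω j) := by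
        rw [← lt_div_iff₀ hNpos]
        linarith
      linarith [h2]
    · right
      simp only [Set.mem_setOf_eq, Finset.sum_sub_distrib, Finset.sum_const,
        Finset.card_univ, Fintype.card_fin, nsmul_eq_mul, mul_one]
      have h2 : ∑ j : Fin N, g i (ω j) < (errD D (f i) - ε) * N := by
        rw [← div_lt_iff₀ hNpos]
        linarith
      nlinarith [h2]
  have hGcbound : μ Gᶜ ≤ ENNReal.ofReal δ := by
    calc μ Gᶜ ≤ μ (⋃ i : Fin M, S i) := measure_mono hGc
      _ ≤ ∑ i : Fin M, μ (S i) := by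
          have huniv : (⋃ i, S i) = ⋃ i ∈ (Finset.univ : Finset (Fin M)), S i := by simp
          rw [huniv]
          exact measure_biUnion_finset_le _ _
      _ ≤ ∑ _i : Fin M, ENNReal.ofReal (δ / M) := by
          apply Finset.sum_le_sum
          intro i _
          calc μ (S i) ≤ μ _ + μ _ := measure_union_le _ _
            _ ≤ ENNReal.ofReal (δ / (2*M)) + ENNReal.ofReal (δ / (2*M)) :=
                add_le_add (hup i) (hdown i)
            _ = ENNReal.ofReal (δ / M) := by
                rw [← ENNReal.ofReal_add (by positivity) (by positivity)]
                congr 1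
                field_simp
                ring
      _ = ENNReal.ofReal δ := by
          rw [Finset.sum_const, Finset.card_univ, Fintype.card_fin, nsmul_eq_mul,
            ← ENNReal.ofReal_natCast M, ← ENNReal.ofReal_mul (by positivity)]
          congr 1
          field_simp
  have hGmeas : ENNReal.ofReal (1 - δ) ≤ μ G := by
    have h1 : (1 : ℝ≥0∞) ≤ μ G + μ Gᶜ := by
      rw [← measure_univ (μ := μ)]
      rw [← Set.union_compl_self G]
      exact measure_union_le _ _
    have h2 : (1 : ℝ≥0∞) ≤ μ G + ENNReal.ofReal δ :=
      le_trans h1 (add_le_add_right hGcbound _)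
    rw [ENNReal.ofReal_sub _ hδ0.le]
    simp only [ENNReal.ofReal_one]
    exact tsub_le_iff_right.mpr h2
  refine le_trans hGmeas (measure_mono ?_)
  intro ω hω
  rw [hG] at hω
  simp only [Set.mem_setOf_eq] at hω ⊢
  obtain ⟨i0, _, hi0⟩ := Finset.exists_mem_eq_inf' (Finset.univ_nonempty_iff.mpr ⟨⟨0, hM⟩⟩)
    (fun i : Fin M => errD D (f i))
  rw [hi0]
  have h1 : errD D (f (sel ω)) ≤ empErr (f (sel ω)) ω + ε := by
    have := hω (sel ω)
    rw [abs_le] at this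
    rw [hemp]
    linarith [this.1]
  have h2 : empErr (f (sel ω)) ω ≤ empErr (f i0) ω := hsel ω i0
  have h3 : empErr (f i0) ω ≤ errD D (f i0) + ε := by
    have := hω i0
    rw [abs_le] at this
    rw [hemp]
    linarith [this.2]
  linarith
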